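/- Let L be an even integral lattice and ν an automorphism of L whose fixed sublattice L^ν is trivial. If ν has odd order m, or if ⟨α, ν^{m/2}(α)⟩ is even for all α ∈ L (when m is even), then a standard lift ν̂ of ν to the lattice VOA automorphism group has order m; otherwise ν̂ has order 2m. In particular, for a standard lift: if m is odd, the lift has order m. -/

import Mathlib

open Classical in

/-- Order of a standard lift, at the level of the cocycle action.  Let `ν` be an
automorphism of order `m` of an even lattice `(L, B)` with trivial fixed sublattice,
and let `u : L → {±1}` be the cocycle phase of a standard lift, so that the `m`-th
power of the lift acts on `e_α` by the sign `(-1)^{⟨α, ν^{m/2} α⟩}` when `m` is even,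
and trivially when `m` is odd.  Modelling the lift as
`f : (α, s) ↦ (ν α, u(α)·s)` on basis elements with phases, the lift has order `m`
if `m` is odd or `⟨α, ν^{m/2} α⟩` is even for all `α`, and order `2m` otherwise. -/
theorem stmt8 (L : Type*) [AddCommGroup L] (B : L →+ L →+ ℤ)
    (hsymm : ∀ x y : L, B x y = B y x) (heven : ∀ x : L, Even (B x x))
    (ν : AddAut L) (m : ℕ) (hm : 0 < m) (hord : addOrderOf ν = m)
    (hfix : ∀ α : L, ν α = α → α = 0)
    (u : L → ℤˣ) (hu0 : u 0 = 1)
    (hpow : ∀ α : L, (∏ i ∈ Finset.range m, u ((i • ν) α)) =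
      if Even m then (-1 : ℤˣ) ^ (B α (((m / 2) • ν) α)) else 1) :
    ∀ f : L × ℤˣ → L × ℤˣ, (f = fun p => (ν p.1, u p.1 * p.2)) →
      if Odd m ∨ ∀ α : L, Even (B α (((m / 2) • ν) α)) then
        (∀ p, f^[m] p = p) ∧ (∀ j, 0 < j → j < m → ∃ p, f^[j] p ≠ p)
      else
        (∀ p, f^[2 * m] p = p) ∧ (∀ j, 0 < j → j < 2 * m → ∃ p, f^[j] p ≠ p) := by
  intro f hf
  subst hf
  set F : L × ℤˣ → L × ℤˣ := fun p => (ν p.1, u p.1 * p.2) with hF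
  have hit : ∀ (j : ℕ) (p : L × ℤˣ),
      F^[j] p = ((j • ν) p.1, (∏ i ∈ Finset.range j, u ((i • ν) p.1)) * p.2) := by
    intro j
    induction j with
    | zero => intro p; simp
    | succ j ih =>
      intro p
      rw [Function.iterate_succ_apply', ih]
      simp only [hF]
      refine Prod.ext ?_ ?_
      · simp [succ_nsmul']
      · simp [Finset.prod_range_succ, mul_comm, mul_left_comm, mul_assoc]
  have hνm : m • ν = 0 := by rw [← hord]; exact addOrderOf_nsmul_eq_zero ν
  have hνmapp : ∀ α : L, (m • ν) α = α := by intro α; rw [hνm]; rfl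
  have hne : ∀ j, 0 < j → j < m → ∃ α : L, (j • ν) α ≠ α := by
    intro j hj hjm
    by_contra h
    push_neg at h
    have h1 : j • ν = 0 := by ext α; exact h α
    have := Nat.le_of_dvd hj (hord ▸ addOrderOf_dvd_of_nsmul_eq_zero h1)
    omega
  split_ifs with h
  · constructor
    · intro p
      rw [hit, hνmapp]
      have h2 : (∏ i ∈ Finset.range m, u ((i • ν) p.1)) = 1 := by
        rw [hpow]
        rcases h with hodd | hev
        · rw [if_neg (by simpa using hodd)]
        · split_ifs with he
          · exact Even.neg_one_zpow (hev p.1)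
          · rfl
      rw [h2, one_mul]
    · intro j hj hjm
      obtain ⟨α, hα⟩ := hne j hj hjm
      refine ⟨(α, 1), ?_⟩
      rw [hit]
      intro hc
      exact hα (congrArg Prod.fst hc)
  · push_neg at h
    obtain ⟨hnodd, α₀, hα₀⟩ := h
    have hmeven : Even m := Nat.not_odd_iff_even.mp hnodd
    have hα₀' : Odd (B α₀ (((m / 2) • ν) α₀)) := Int.not_even_iff_odd.mp hα₀
    have hFm : ∀ p : L × ℤˣ,
        F^[m] p = (p.1, (∏ i ∈ Finset.range m, u ((i • ν) p.1)) * p.2) := by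
      intro p; rw [hit, hνmapp]
    constructor
    · intro p
      rw [mul_comm, Function.iterate_mul, Function.iterate_succ_apply,
        Function.iterate_one, hFm, hFm]
      simp [← mul_assoc, Int.units_mul_self]
    · intro j hj hjm
      rcases lt_trichotomy j m with hlt | heq | hgt
      · obtain ⟨α, hα⟩ := hne j hj hlt
        refine ⟨(α, 1), ?_⟩
        rw [hit]
        intro hc
        exact hα (congrArg Prod.fst hc)
      · subst heq
        refine ⟨(α₀, 1), ?_⟩
        rw [hFm]
        simp only [mul_one]
        intro hc
        have h2 := congrArg Prod.snd hc
        simp only at h2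
        rw [hpow, if_pos hmeven] at h2
        obtain ⟨k, hk⟩ := hα₀'
        rw [hk, zpow_add, zpow_one, zpow_mul] at h2
        rw [show ((-1:ℤˣ))^(2:ℤ) = 1 from rfl, one_zpow] at h2
        exact (by decide : (-1 : ℤˣ) ≠ 1) h2
      · obtain ⟨α, hα⟩ := hne (j - m) (by omega) (by omega)
        refine ⟨(α, 1), ?_⟩
        have : j = (j - m) + m := by omega
        rw [this, Function.iterate_add_apply, hFm, hit]
        intro hc
        exact hα (congrArg Prod.fst hc)
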